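/- Let k be a positive integer and let i''_1 < i''_2 < ⋯ < i''_{2k} be positive integers. For integer a with a/2 ≥ k (a even), define f(a) = Δ(1, …, a/2−k, a/2−k+i''_1, …, a/2−k+i''_{2k}) / Δ(1, …, a/2−k, a/2−k+1, …, a/2−k+2k), where Δ is the Vandermonde product. Then f(a) agrees with a polynomial in a whose degree equals (i''_1 − 1) + (i''_2 − 2) + ⋯ + (i''_{2k} − 2k). -/

import Mathlib

/-- The Vandermonde product `Δ(x_1, …, x_n) = ∏_{1 ≤ u < v ≤ n} (x_v − x_u)` of a
list of rationals. -/
def vprod : List ℚ → ℚ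
  | [] => 1
  | x :: xs => ((xs.map (fun y => y - x)).prod) * vprod xs

/-- The list `1, 2, …, n`. -/
def baseList (n : ℕ) : List ℚ := (List.range n).map (fun t => ((t : ℚ) + 1))

open Polynomial Finset

lemma vprod_append (L M : List ℚ) :
    vprod (L ++ M) = vprod L * vprod M *
      (L.map fun x => (M.map fun y => y - x).prod).prod := by
  induction L with
  | nil => simp [vprod]
  | cons x L ih =>
    simp only [List.cons_append, vprod, List.append_eq, List.map_append, List.prod_append, ih,
      List.map_cons, List.prod_cons]
    ring

lemma vprod_pos {L : List ℚ} (h : L.Pairwise (· < ·)) : 0 < vprod L := by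
  induction L with
  | nil => norm_num [vprod]
  | cons x L ih =>
    rw [List.pairwise_cons] at h
    refine mul_pos (List.prod_pos ?_) (ih h.2)
    intro y hy
    simp only [List.mem_map] at hy
    obtain ⟨z, hz, rfl⟩ := hy
    linarith [h.1 z hz]

lemma vprod_shift (c : ℚ) (L : List ℚ) : vprod (L.map (fun x => x + c)) = vprod L := by
  induction L with
  | nil => rfl
  | cons x L ih =>
    simp only [List.map_cons, vprod, List.map_map, ih]
    have h : ((fun y => y - (x + c)) ∘ fun x => x + c) = fun y => y - x := by
      funext y; simp
    rw [h]

lemma list_range_prod (n : ℕ) (f : ℕ → ℚ) :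
    ((List.range n).map f).prod = ∏ t ∈ Finset.range n, f t := by
  induction n with
  | zero => simp
  | succ n ih => simp [List.range_succ, Finset.prod_range_succ, ih]

lemma per_v (m v iv : ℕ) (hv : v < iv) :
    (∏ t ∈ Finset.range m, ((m:ℚ) + iv - ((t:ℚ)+1))) * (∏ j ∈ Finset.Ico (v+1) iv, (j:ℚ)) =
    (∏ t ∈ Finset.range m, ((m:ℚ) + v + 1 - ((t:ℚ)+1))) *
      (∏ j ∈ Finset.Ico (v+1) iv, ((m:ℚ) + j)) := by
  have hPn : (∏ t ∈ Finset.range m, ((m:ℚ) + iv - ((t:ℚ)+1)))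
      = ∏ j ∈ Finset.Ico iv (m + iv), (j:ℚ) := by
    rw [Finset.prod_Ico_eq_prod_range]
    simp only [Nat.add_sub_cancel]
    rw [← Finset.prod_range_reflect]
    refine Finset.prod_congr rfl fun t ht => ?_
    rw [Finset.mem_range] at ht
    have h3 : m - 1 - t = m - (t+1) := by omega
    rw [h3, Nat.cast_sub (by omega : t + 1 ≤ m)]
    push_cast
    ring
  have hPd : (∏ t ∈ Finset.range m, ((m:ℚ) + v + 1 - ((t:ℚ)+1)))
      = ∏ j ∈ Finset.Ico (v+1) (m + v + 1), (j:ℚ) := by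
    rw [Finset.prod_Ico_eq_prod_range]
    have hc : m + v + 1 - (v + 1) = m := by omega
    rw [hc, ← Finset.prod_range_reflect]
    refine Finset.prod_congr rfl fun t ht => ?_
    rw [Finset.mem_range] at ht
    have h3 : m - 1 - t = m - (t+1) := by omega
    rw [h3, Nat.cast_sub (by omega : t + 1 ≤ m)]
    push_cast
    ring
  have hMh : (∏ j ∈ Finset.Ico (m + v + 1) (m + iv), (j:ℚ))
      = ∏ j ∈ Finset.Ico (v+1) iv, ((m:ℚ) + j) := by
    rw [Finset.prod_Ico_eq_prod_range, Finset.prod_Ico_eq_prod_range]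
    have hc : m + iv - (m + v + 1) = iv - (v + 1) := by omega
    rw [hc]
    refine Finset.prod_congr rfl fun t ht => ?_
    push_cast
    ring
  rw [hPn, hPd, ← hMh, mul_comm,
    Finset.prod_Ico_consecutive _ (by omega : v + 1 ≤ iv) (by omega : iv ≤ m + iv),
    Finset.prod_Ico_consecutive _ (by omega : v + 1 ≤ m + v + 1) (by omega : m + v + 1 ≤ m + iv)]

lemma baseList_eq (n : ℕ) : baseList n = (List.range n).map (fun t : ℕ => ((t:ℕ):ℚ)+1) := by
  rw [baseList, show (do let a ← List.range n; pure ((a:ℚ)) : List ℚ)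
      = (List.range n).map (fun a : ℕ => (a:ℚ)) from List.flatMap_pure_eq_map _ _,
    List.map_map]
  rfl

lemma baseList_map_prod (n : ℕ) (g : ℚ → ℚ) :
    ((baseList n).map g).prod = ∏ t ∈ Finset.range n, g ((t:ℚ)+1) := by
  rw [baseList_eq, List.map_map, list_range_prod]
  rfl

lemma main_calc (k : ℕ) (i : Fin (2*k) → ℕ) (hmono : StrictMono i)
    (hlt : ∀ v : Fin (2*k), (v:ℕ) < i v) (m : ℕ) :
    vprod (baseList m ++ List.ofFn (fun v : Fin (2*k) => ((m:ℚ) + i v))) /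
    vprod (baseList m ++ List.ofFn (fun v : Fin (2*k) => ((m:ℚ) + (v:ℕ) + 1))) =
    (vprod (List.ofFn fun v : Fin (2*k) => (i v : ℚ)) /
     vprod (List.ofFn fun v : Fin (2*k) => ((v:ℕ):ℚ) + 1)) *
    ∏ v : Fin (2*k), ((∏ j ∈ Finset.Ico ((v:ℕ)+1) (i v), (j:ℚ))⁻¹ *
      ∏ j ∈ Finset.Ico ((v:ℕ)+1) (i v), ((m:ℚ) + j)) := by
  have hbase : (baseList m).Pairwise (· < ·) := by
    rw [baseList_eq, List.pairwise_map]
    refine (List.pairwise_lt_range (n := m)).imp fun h => ?_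
    have := (Nat.cast_lt (α := ℚ)).2 h
    linarith
  have hvb : 0 < vprod (baseList m) := vprod_pos hbase
  have hT : 0 < vprod (List.ofFn fun v : Fin (2*k) => (i v : ℚ)) := by
    refine vprod_pos (List.pairwise_ofFn.2 fun u v huv => ?_)
    exact_mod_cast hmono huv
  have hT' : 0 < vprod (List.ofFn fun v : Fin (2*k) => ((v:ℕ):ℚ) + 1) := by
    refine vprod_pos (List.pairwise_ofFn.2 fun u v huv => ?_)
    have h2 : (u:ℕ) < (v:ℕ) := huv
    have h3 : ((u:ℕ):ℚ) < ((v:ℕ):ℚ) := by exact_mod_cast h2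
    linarith
  rw [vprod_append, vprod_append]
  have hTn : vprod (List.ofFn fun v : Fin (2*k) => ((m:ℚ) + i v))
      = vprod (List.ofFn fun v : Fin (2*k) => (i v : ℚ)) := by
    rw [← vprod_shift (m:ℚ) (List.ofFn fun v : Fin (2*k) => (i v : ℚ)), List.map_ofFn]
    exact congrArg vprod (congrArg List.ofFn (funext fun v => by
      simp only [Function.comp_apply]; ring))
  have hTd : vprod (List.ofFn fun v : Fin (2*k) => ((m:ℚ) + (v:ℕ) + 1))
      = vprod (List.ofFn fun v : Fin (2*k) => ((v:ℕ):ℚ) + 1) := by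
    rw [← vprod_shift (m:ℚ) (List.ofFn fun v : Fin (2*k) => ((v:ℕ):ℚ) + 1), List.map_ofFn]
    exact congrArg vprod (congrArg List.ofFn (funext fun v => by
      simp only [Function.comp_apply]; ring))
  have hCn : ((baseList m).map fun x =>
        ((List.ofFn (fun v : Fin (2*k) => ((m:ℚ) + i v))).map fun y => y - x).prod).prod
      = ∏ v : Fin (2*k), ∏ t ∈ Finset.range m, ((m:ℚ) + i v - ((t:ℚ)+1)) := by
    rw [baseList_map_prod, Finset.prod_comm]
    refine Finset.prod_congr rfl fun t _ => ?_
    simp [List.map_ofFn, List.prod_ofFn, Function.comp]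
  have hCd : ((baseList m).map fun x =>
        ((List.ofFn (fun v : Fin (2*k) => ((m:ℚ) + (v:ℕ) + 1))).map fun y => y - x).prod).prod
      = ∏ v : Fin (2*k), ∏ t ∈ Finset.range m, ((m:ℚ) + (v:ℕ) + 1 - ((t:ℚ)+1)) := by
    rw [baseList_map_prod, Finset.prod_comm]
    refine Finset.prod_congr rfl fun t _ => ?_
    simp [List.map_ofFn, List.prod_ofFn, Function.comp]
  rw [hTn, hTd, hCn, hCd, Finset.prod_mul_distrib, Finset.prod_inv_distrib]
  have hPd : (0:ℚ) < ∏ v : Fin (2*k), ∏ t ∈ Finset.range m,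
      ((m:ℚ) + (v:ℕ) + 1 - ((t:ℚ)+1)) := by
    refine Finset.prod_pos fun v _ => Finset.prod_pos fun t ht => ?_
    rw [Finset.mem_range] at ht
    have h1 : (t:ℚ) < m := by exact_mod_cast ht
    have h2 : (0:ℚ) ≤ ((v:ℕ):ℚ) := Nat.cast_nonneg _
    linarith
  have hDl : (0:ℚ) < ∏ v : Fin (2*k), ∏ j ∈ Finset.Ico ((v:ℕ)+1) (i v), (j:ℚ) := by
    refine Finset.prod_pos fun v _ => Finset.prod_pos fun j hj => ?_
    rw [Finset.mem_Ico] at hj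
    exact_mod_cast Nat.lt_of_lt_of_le (Nat.succ_pos _) hj.1
  have key : (∏ v : Fin (2*k), ∏ t ∈ Finset.range m, ((m:ℚ) + i v - ((t:ℚ)+1))) *
      (∏ v : Fin (2*k), ∏ j ∈ Finset.Ico ((v:ℕ)+1) (i v), (j:ℚ)) =
      (∏ v : Fin (2*k), ∏ t ∈ Finset.range m, ((m:ℚ) + (v:ℕ) + 1 - ((t:ℚ)+1))) *
      (∏ v : Fin (2*k), ∏ j ∈ Finset.Ico ((v:ℕ)+1) (i v), ((m:ℚ) + j)) := by
    rw [← Finset.prod_mul_distrib, ← Finset.prod_mul_distrib]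
    exact Finset.prod_congr rfl fun v _ => per_v m (v:ℕ) (i v) (hlt v)
  generalize hCN : (∏ v : Fin (2*k), ∏ t ∈ Finset.range m, ((m:ℚ) + i v - ((t:ℚ)+1))) = CN at *
  generalize hCD : (∏ v : Fin (2*k), ∏ t ∈ Finset.range m,
      ((m:ℚ) + (v:ℕ) + 1 - ((t:ℚ)+1))) = CD at *
  generalize hDL : (∏ v : Fin (2*k), ∏ j ∈ Finset.Ico ((v:ℕ)+1) (i v), (j:ℚ)) = DL at *
  generalize hMH : (∏ v : Fin (2*k), ∏ j ∈ Finset.Ico ((v:ℕ)+1) (i v), ((m:ℚ) + j)) = MH at *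
  generalize hVB : vprod (baseList m) = VB at *
  generalize hTT : vprod (List.ofFn fun v : Fin (2*k) => (i v : ℚ)) = T at *
  generalize hTT' : vprod (List.ofFn fun v : Fin (2*k) => ((v:ℕ):ℚ) + 1) = T' at *
  field_simp
  linear_combination key

theorem stmt12 (k : ℕ) (hk : 0 < k)
    (i'' : Fin (2 * k) → ℕ) (hmono : StrictMono i'') (hpos : ∀ v, 0 < i'' v) :
    ∃ p : Polynomial ℚ,
      p.degree = ((∑ v : Fin (2 * k), (i'' v - ((v : ℕ) + 1)) : ℕ) : WithBot ℕ) ∧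
      ∀ a : ℤ, 2 ∣ a → (2 * k : ℤ) ≤ a →
        vprod (baseList ((a / 2 - k).toNat) ++
              List.ofFn (fun v : Fin (2 * k) => (((a / 2 - k).toNat : ℚ) + i'' v))) /
          vprod (baseList ((a / 2 - k).toNat) ++
              List.ofFn (fun v : Fin (2 * k) => (((a / 2 - k).toNat : ℚ) + (v : ℕ) + 1))) =
        p.eval (a : ℚ) := by
  have hltaux : ∀ n (hn : n < 2*k), n < i'' ⟨n, hn⟩ := by
    intro n
    induction n with
    | zero => intro hn; exact hpos _
    | succ n ih =>
      intro hn
      have h1 : n < 2*k := by omega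
      have h2 := hmono (show (⟨n, h1⟩ : Fin (2*k)) < ⟨n+1, hn⟩ from by simp [Fin.lt_def])
      have h3 := ih h1
      omega
  have hlt : ∀ v : Fin (2*k), (v:ℕ) < i'' v := fun v => hltaux v v.isLt
  set T : ℚ := vprod (List.ofFn fun v : Fin (2*k) => (i'' v : ℚ)) with hTdef
  set T' : ℚ := vprod (List.ofFn fun v : Fin (2*k) => ((v:ℕ):ℚ) + 1) with hT'def
  have hT : 0 < T := by
    refine vprod_pos (List.pairwise_ofFn.2 fun u v huv => ?_)
    exact_mod_cast hmono huv
  have hT' : 0 < T' := by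
    refine vprod_pos (List.pairwise_ofFn.2 fun u v huv => ?_)
    have h2 : (u:ℕ) < (v:ℕ) := huv
    have h3 : ((u:ℕ):ℚ) < ((v:ℕ):ℚ) := by exact_mod_cast h2
    linarith
  have hDl : ∀ v : Fin (2*k), (0:ℚ) < ∏ j ∈ Finset.Ico ((v:ℕ)+1) (i'' v), (j:ℚ) := by
    intro v
    refine Finset.prod_pos fun j hj => ?_
    rw [Finset.mem_Ico] at hj
    exact_mod_cast Nat.lt_of_lt_of_le (Nat.succ_pos _) hj.1
  set c : ℚ := (T / T') * ∏ v : Fin (2*k), (∏ j ∈ Finset.Ico ((v:ℕ)+1) (i'' v), (j:ℚ))⁻¹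
    with hcdef
  have hc : c ≠ 0 := by
    refine ne_of_gt (mul_pos (div_pos hT hT') (Finset.prod_pos fun v _ => ?_))
    exact inv_pos.2 (hDl v)
  refine ⟨Polynomial.C c * ∏ v : Fin (2*k), ∏ j ∈ Finset.Ico ((v:ℕ)+1) (i'' v),
      (Polynomial.C (2⁻¹:ℚ) * Polynomial.X + Polynomial.C ((j:ℚ) - k)), ?_, ?_⟩
  · rw [Polynomial.degree_mul, Polynomial.degree_C hc, zero_add, Polynomial.degree_prod]
    have hinner : ∀ v : Fin (2*k),
        (∏ j ∈ Finset.Ico ((v:ℕ)+1) (i'' v),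
          (Polynomial.C (2⁻¹:ℚ) * Polynomial.X + Polynomial.C ((j:ℚ) - k))).degree
        = ((i'' v - ((v:ℕ) + 1) : ℕ) : WithBot ℕ) := by
      intro v
      rw [Polynomial.degree_prod,
        Finset.sum_congr rfl fun j _ => Polynomial.degree_linear (by norm_num)]
      rw [show (1 : WithBot ℕ) = ((1:ℕ) : WithBot ℕ) from rfl, ← Nat.cast_sum]
      simp [Nat.card_Ico]
    rw [Finset.sum_congr rfl fun v _ => hinner v, ← Nat.cast_sum]
  · intro a ha2 hak
    obtain ⟨b, rfl⟩ := ha2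
    have hb : 2 * b / 2 = b := by omega
    have hbk : (k:ℤ) ≤ b := by omega
    simp only [hb]
    set m : ℕ := (b - (k:ℤ)).toNat with hmdef
    have hm : ((m:ℕ):ℚ) = (b:ℚ) - k := by
      have h1 : ((m:ℕ) : ℤ) = b - k := Int.toNat_of_nonneg (by omega)
      have h2 := congrArg (Int.cast : ℤ → ℚ) h1
      push_cast at h2
      exact h2
    rw [main_calc k i'' hmono hlt m]
    simp only [Polynomial.eval_mul, Polynomial.eval_C, Polynomial.eval_prod,
      Polynomial.eval_add, Polynomial.eval_X]
    rw [hcdef, Finset.prod_mul_distrib]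
    rw [← mul_assoc]
    congr 1
    refine Finset.prod_congr rfl fun v _ => Finset.prod_congr rfl fun j _ => ?_
    rw [hm]
    push_cast
    ring
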